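/- For every n ≥ 3, d ≥ 2 and 0 ≤ m ≤ d, the Krawtchouk polynomial K_m = K_{m,d,n} is an eigenfunction of the RWBD transition matrix P* with eigenvalue λ_m = 1 − mn/(d(n−1)): for all x ∈ {0,…,d}, Σ_{y=0}^d P*(x,y)·K_m(y) = (1 − mn/(d(n−1)))·K_m(x). -/

import Mathlib

open Finset

noncomputable section

/-- Total variation distance between two distributions on a finite set. -/
def tv {S : Type*} [Fintype S] (μ ν : S → ℝ) : ℝ :=
  (∑ s, |μ s - ν s|) / 2

/-- The transition matrix of the Rook's Walk Birth-Death (RWBD) chain on `{0,…,d}`. -/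
def BD.P (n d : ℕ) : Matrix (Fin (d + 1)) (Fin (d + 1)) ℝ :=
  Matrix.of fun x y =>
    if (y : ℕ) + 1 = (x : ℕ) then (x : ℝ) / ((d : ℝ) * ((n : ℝ) - 1))
    else if (y : ℕ) = (x : ℕ) then (x : ℝ) * ((n : ℝ) - 2) / ((d : ℝ) * ((n : ℝ) - 1))
    else if (y : ℕ) = (x : ℕ) + 1 then ((d : ℝ) - (x : ℝ)) / (d : ℝ)
    else 0

/-- The stationary distribution of the RWBD chain: `π*(x) = C(d,x)(n-1)^x n^{-d}`. -/
def BD.pi (n d : ℕ) : Fin (d + 1) → ℝ :=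
  fun x => (d.choose (x : ℕ) : ℝ) * ((n : ℝ) - 1) ^ (x : ℕ) / (n : ℝ) ^ d

/-- Worst-case total variation distance to stationarity of the RWBD chain at time `t`. -/
def BD.dist (n d : ℕ) (t : ℕ) : ℝ :=
  ⨆ x : Fin (d + 1), tv ((BD.P n d ^ t) x) (BD.pi n d)

/-- The mixing time of the RWBD chain. -/
def BD.tmix (n d : ℕ) (ε : ℝ) : ℕ := sInf {t : ℕ | BD.dist n d t ≤ ε}

/-- The generalized binomial coefficient `C(x,j) = x(x-1)⋯(x-j+1)/j!`. -/
def genChoose (x : ℝ) (j : ℕ) : ℝ :=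
  (∏ i ∈ Finset.range j, (x - (i : ℝ))) / (Nat.factorial j : ℝ)

/-- The Krawtchouk polynomial `K_{m,N,s}` evaluated at `x`. -/
def kraw (m N s : ℕ) (x : ℝ) : ℝ :=
  ∑ j ∈ Finset.range (m + 1),
    (-1 : ℝ) ^ j * genChoose x j * genChoose ((N : ℝ) - x) (m - j) * ((s : ℝ) - 1) ^ (m - j)

open Polynomial

lemma genChoose_natCast (k j : ℕ) : genChoose (k : ℝ) j = (k.choose j : ℝ) := by
  have hprod : ∏ i ∈ Finset.range j, ((k : ℝ) - (i : ℝ)) = (k.descFactorial j : ℝ) := by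
    induction j with
    | zero => simp
    | succ j ih =>
      rw [Finset.prod_range_succ, ih, Nat.descFactorial_succ]
      rcases le_or_gt j k with h | h
      · push_cast [h]; ring
      · rw [Nat.descFactorial_of_lt h]
        simp
  rw [genChoose, hprod, Nat.descFactorial_eq_factorial_mul_choose]
  push_cast
  rw [mul_comm, mul_div_assoc, div_self (by positivity), mul_one]

/-- coefficient of (1 + c X)^y -/
lemma coeff_one_add_CX_pow (c : ℝ) (y j : ℕ) :
    ((1 + C c * X : ℝ[X]) ^ y).coeff j = (y.choose j : ℝ) * c ^ j := by
  rw [add_comm, add_pow]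
  simp only [one_pow, mul_pow, ← C_pow, finset_sum_coeff, mul_one,
    mul_comm, mul_assoc, coeff_C_mul, coeff_natCast_mul, coeff_X_pow]
  rw [Finset.sum_eq_single j]
  · rw [one_mul, mul_comm (X ^ j : ℝ[X]) _, coeff_C_mul, coeff_X_pow, if_pos rfl]
    ring
  · intro b _ hb
    rw [one_mul, mul_comm (X ^ b : ℝ[X]) _, coeff_C_mul, coeff_X_pow, if_neg (Ne.symm hb)]
    simp
  · intro h
    simp only [Finset.mem_range, not_lt] at h
    rw [Nat.choose_eq_zero_of_lt (by omega)]
    simp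

lemma one_sub_X_eq : (1 - X : ℝ[X]) = 1 + C (-1) * X := by
  rw [map_neg, C_1]; ring

def Gp (s : ℝ) (a b : ℕ) : ℝ[X] := (1 - X) ^ a * (1 + C s * X) ^ b

lemma kraw_eq_coeff (m d n y : ℕ) (hy : y ≤ d) :
    kraw m d n (y : ℝ) = (Gp ((n : ℝ) - 1) y (d - y)).coeff m := by
  rw [Gp, coeff_mul, Finset.Nat.sum_antidiagonal_eq_sum_range_succ_mk, kraw]
  refine Finset.sum_congr rfl fun j _ => ?_
  rw [one_sub_X_eq, coeff_one_add_CX_pow, coeff_one_add_CX_pow, genChoose_natCast]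
  have : (d : ℝ) - (y : ℝ) = ((d - y : ℕ) : ℝ) := by
    push_cast [hy]; ring
  rw [this, genChoose_natCast]
  ring

lemma coeff_X_mul_derivative (p : ℝ[X]) (m : ℕ) :
    (X * derivative p).coeff m = (m : ℝ) * p.coeff m := by
  cases m with
  | zero => simp
  | succ k => rw [coeff_X_mul, coeff_derivative]; push_cast; ring

lemma key_identity (s : ℝ) (a b : ℕ) :
    (a : ℝ[X]) * Gp s (a - 1) (b + 1) + (a : ℝ[X]) * (C s - 1) * Gp s a b
      + C s * (b : ℝ[X]) * Gp s (a + 1) (b - 1)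
    = ((a : ℝ[X]) + (b : ℝ[X])) * C s * Gp s a b
      - (C s + 1) * (X * derivative (Gp s a b)) := by
  rcases a with _ | a <;> rcases b with _ | b <;>
    simp only [Gp, Nat.add_sub_cancel, Nat.succ_sub_one, Nat.zero_sub, Nat.cast_zero,
      Nat.cast_succ, pow_zero, derivative_mul, derivative_pow, derivative_one, derivative_X,
      derivative_sub, derivative_add, derivative_C, C_eq_natCast, map_add, map_one, map_natCast, Nat.cast_add, Nat.cast_one,
      mul_one, one_mul, zero_mul, mul_zero, zero_add, add_zero, zero_sub, sub_zero] <;>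
    push_cast <;> ring

lemma coeff_key (s : ℝ) (a b m : ℕ) :
    (a : ℝ) * (Gp s (a - 1) (b + 1)).coeff m + (a : ℝ) * (s - 1) * (Gp s a b).coeff m
      + s * (b : ℝ) * (Gp s (a + 1) (b - 1)).coeff m
    = (((a : ℝ) + (b : ℝ)) * s - (m : ℝ) * (s + 1)) * (Gp s a b).coeff m := by
  have h := congrArg (fun p => Polynomial.coeff p m) (key_identity s a b)
  simp only [coeff_add, coeff_sub, sub_mul, add_mul, one_mul, mul_assoc,
    coeff_natCast_mul, coeff_C_mul, coeff_X_mul_derivative] at h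
  linear_combination h

lemma kraw_threeterm (n d m a b : ℕ) (hab : a + b = d) :
    (a : ℝ) * kraw m d n (((a - 1 : ℕ) : ℝ)) + (a : ℝ) * ((n : ℝ) - 2) * kraw m d n ((a : ℕ) : ℝ)
      + ((n : ℝ) - 1) * (b : ℝ) * kraw m d n (((a + 1 : ℕ) : ℝ))
    = ((d : ℝ) * ((n : ℝ) - 1) - (m : ℝ) * (n : ℝ)) * kraw m d n ((a : ℕ) : ℝ) := by
  have h := coeff_key ((n : ℝ) - 1) a b m
  have hka : kraw m d n ((a : ℕ) : ℝ) = (Gp ((n : ℝ) - 1) a b).coeff m := by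
    rw [kraw_eq_coeff m d n a (by omega), show d - a = b by omega]
  rcases a with _ | a
  · rcases b with _ | b
    · rw [hka, ← hab]
      push_cast
      push_cast at h
      linear_combination h
    · have hk1 : kraw m d n ((1 : ℕ) : ℝ) = (Gp ((n : ℝ) - 1) 1 b).coeff m := by
        rw [kraw_eq_coeff m d n 1 (by omega), show d - 1 = b by omega]
      rw [show (0 + 1 : ℕ) = 1 from rfl, hka, hk1, ← hab]
      rw [show b + 1 - 1 = b by omega] at h
      push_cast at h ⊢
      linear_combination h
  · have hk0 : kraw m d n (((a + 1 - 1 : ℕ)) : ℝ) = (Gp ((n : ℝ) - 1) a (b + 1)).coeff m := by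
      rw [Nat.add_sub_cancel, kraw_eq_coeff m d n a (by omega), show d - a = b + 1 by omega]
    rw [show a + 1 - 1 = a by omega] at h
    rcases b with _ | b
    · rw [hka, hk0, ← hab]
      push_cast at h ⊢
      linear_combination h
    · have hk2 : kraw m d n (((a + 1 + 1 : ℕ)) : ℝ) = (Gp ((n : ℝ) - 1) (a + 1 + 1) b).coeff m := by
        rw [kraw_eq_coeff m d n (a + 1 + 1) (by omega), show d - (a + 1 + 1) = b by omega]
      rw [show b + 1 - 1 = b by omega] at h
      rw [hka, hk0, hk2, ← hab]
      push_cast at h ⊢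
      linear_combination h


/-- The Krawtchouk polynomial `K_{m,d,n}` is an eigenfunction of the RWBD transition
matrix with eigenvalue `1 - mn/(d(n-1))`. -/
theorem rwbd_krawtchouk_eigenfunction (n d m : ℕ) (hn : 3 ≤ n) (hd : 2 ≤ d)
    (hm : m ≤ d) (x : Fin (d + 1)) :
    ∑ y : Fin (d + 1), BD.P n d x y * kraw m d n ((y : ℕ) : ℝ) =
      (1 - (m : ℝ) * (n : ℝ) / ((d : ℝ) * ((n : ℝ) - 1))) * kraw m d n ((x : ℕ) : ℝ) := by
  obtain ⟨x0, hx⟩ := x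
  have hx' : x0 ≤ d := by omega
  have hn3 : (3 : ℝ) ≤ (n : ℝ) := by exact_mod_cast hn
  have hd2 : (2 : ℝ) ≤ (d : ℝ) := by exact_mod_cast hd
  have hD : ((d : ℝ) * ((n : ℝ) - 1)) ≠ 0 := by nlinarith
  have hd0 : (d : ℝ) ≠ 0 := by nlinarith
  have hpt : ∀ y : Fin (d + 1),
      BD.P n d ⟨x0, hx⟩ y * kraw m d n ((y : ℕ) : ℝ) =
      (fun z : ℕ => (if z + 1 = x0 then (x0 : ℝ) / ((d : ℝ) * ((n : ℝ) - 1))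
        else if z = x0 then (x0 : ℝ) * ((n : ℝ) - 2) / ((d : ℝ) * ((n : ℝ) - 1))
        else if z = x0 + 1 then ((d : ℝ) - (x0 : ℝ)) / (d : ℝ)
        else 0) * kraw m d n (z : ℝ)) ((y : ℕ)) := fun y => rfl
  rw [Finset.sum_congr rfl (fun y _ => hpt y),
    Fin.sum_univ_eq_sum_range (fun z : ℕ =>
      (if z + 1 = x0 then (x0 : ℝ) / ((d : ℝ) * ((n : ℝ) - 1))
        else if z = x0 then (x0 : ℝ) * ((n : ℝ) - 2) / ((d : ℝ) * ((n : ℝ) - 1))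
        else if z = x0 + 1 then ((d : ℝ) - (x0 : ℝ)) / (d : ℝ)
        else 0) * kraw m d n (z : ℝ)) (d + 1)]
  have hsum : ∑ z ∈ Finset.range (d + 1),
      (if z + 1 = x0 then (x0 : ℝ) / ((d : ℝ) * ((n : ℝ) - 1))
        else if z = x0 then (x0 : ℝ) * ((n : ℝ) - 2) / ((d : ℝ) * ((n : ℝ) - 1))
        else if z = x0 + 1 then ((d : ℝ) - (x0 : ℝ)) / (d : ℝ)
        else 0) * kraw m d n (z : ℝ)
      = (x0 : ℝ) / ((d : ℝ) * ((n : ℝ) - 1)) * kraw m d n ((x0 - 1 : ℕ) : ℝ)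
        + (x0 : ℝ) * ((n : ℝ) - 2) / ((d : ℝ) * ((n : ℝ) - 1)) * kraw m d n ((x0 : ℕ) : ℝ)
        + ((d : ℝ) - (x0 : ℝ)) / (d : ℝ) * kraw m d n ((x0 + 1 : ℕ) : ℝ) := by
    rcases x0 with _ | k
    · have hrw : ∀ z : ℕ,
          (if z + 1 = 0 then ((0 : ℕ) : ℝ) / ((d : ℝ) * ((n : ℝ) - 1))
            else if z = 0 then ((0 : ℕ) : ℝ) * ((n : ℝ) - 2) / ((d : ℝ) * ((n : ℝ) - 1))
            else if z = 0 + 1 then ((d : ℝ) - ((0 : ℕ) : ℝ)) / (d : ℝ)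
            else 0) * kraw m d n (z : ℝ)
          = (if z = 0 then ((0 : ℕ) : ℝ) * ((n : ℝ) - 2) / ((d : ℝ) * ((n : ℝ) - 1))
                * kraw m d n (((0 : ℕ) : ℕ) : ℝ) else 0)
            + (if z = 0 + 1 then ((d : ℝ) - ((0 : ℕ) : ℝ)) / (d : ℝ)
                * kraw m d n (((0 + 1 : ℕ) : ℕ) : ℝ) else 0) := by
        intro z
        by_cases h1 : z = 0
        · subst h1
          rw [if_neg (by omega), if_pos rfl, if_pos rfl, if_neg (by omega)]
          push_cast
          ring
        · by_cases h2 : z = 0 + 1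
          · subst h2
            rw [if_neg (by omega), if_neg (by omega), if_pos rfl, if_neg (by omega), if_pos rfl]
            push_cast
            ring
          · rw [if_neg (by omega), if_neg h1, if_neg h2, if_neg h1, if_neg h2]
            ring
      rw [Finset.sum_congr rfl fun z _ => hrw z, Finset.sum_add_distrib,
        Finset.sum_ite_eq' (Finset.range (d + 1)) 0, Finset.sum_ite_eq' (Finset.range (d + 1)) (0 + 1),
        if_pos (Finset.mem_range.mpr (by omega)), if_pos (Finset.mem_range.mpr (by omega))]
      push_cast
      ring
    · have hrw : ∀ z : ℕ,
          (if z + 1 = k + 1 then ((k + 1 : ℕ) : ℝ) / ((d : ℝ) * ((n : ℝ) - 1))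
            else if z = k + 1 then ((k + 1 : ℕ) : ℝ) * ((n : ℝ) - 2) / ((d : ℝ) * ((n : ℝ) - 1))
            else if z = k + 1 + 1 then ((d : ℝ) - ((k + 1 : ℕ) : ℝ)) / (d : ℝ)
            else 0) * kraw m d n (z : ℝ)
          = (if z = k then ((k + 1 : ℕ) : ℝ) / ((d : ℝ) * ((n : ℝ) - 1))
                * kraw m d n ((k : ℕ) : ℝ) else 0)
            + (if z = k + 1 then ((k + 1 : ℕ) : ℝ) * ((n : ℝ) - 2) / ((d : ℝ) * ((n : ℝ) - 1))
                * kraw m d n ((k + 1 : ℕ) : ℝ) else 0)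
            + (if z = k + 1 + 1 then ((d : ℝ) - ((k + 1 : ℕ) : ℝ)) / (d : ℝ)
                * kraw m d n ((k + 1 + 1 : ℕ) : ℝ) else 0) := by
        intro z
        by_cases h1 : z = k
        · subst h1
          rw [if_pos rfl, if_pos rfl, if_neg (by omega), if_neg (by omega)]
          ring
        · by_cases h2 : z = k + 1
          · subst h2
            rw [if_neg (by omega), if_pos rfl, if_neg h1, if_pos rfl, if_neg (by omega)]
            ring
          · by_cases h3 : z = k + 1 + 1
            · subst h3
              rw [if_neg (by omega), if_neg (by omega), if_pos rfl, if_neg (by omega),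
                if_neg (by omega), if_pos rfl]
              ring
            · rw [if_neg (by omega), if_neg h2, if_neg h3, if_neg h1, if_neg h2, if_neg h3]
              ring
      rw [Finset.sum_congr rfl fun z _ => hrw z, Finset.sum_add_distrib, Finset.sum_add_distrib,
        Finset.sum_ite_eq' (Finset.range (d + 1)) k, Finset.sum_ite_eq' (Finset.range (d + 1)) (k + 1),
        Finset.sum_ite_eq' (Finset.range (d + 1)) (k + 1 + 1),
        if_pos (Finset.mem_range.mpr (by omega)), if_pos (Finset.mem_range.mpr (by omega))]
      rw [show k + 1 - 1 = k by omega]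
      by_cases hk2 : k + 1 + 1 < d + 1
      · rw [if_pos (Finset.mem_range.mpr hk2)]
      · rw [if_neg (fun hmem => hk2 (Finset.mem_range.mp hmem))]
        have hkd : k + 1 = d := by omega
        rw [show ((k + 1 : ℕ) : ℝ) = (d : ℝ) by rw [hkd]]
        rw [sub_self, zero_div, zero_mul, add_zero]
  rw [hsum]
  have h := kraw_threeterm n d m x0 (d - x0) (by omega)
  have hb : ((d - x0 : ℕ) : ℝ) = (d : ℝ) - (x0 : ℝ) := by push_cast [hx']; ring
  rw [hb] at h
  generalize kraw m d n ((x0 - 1 : ℕ) : ℝ) = K0 at h ⊢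
  generalize kraw m d n ((x0 + 1 : ℕ) : ℝ) = K2 at h ⊢
  generalize kraw m d n ((x0 : ℕ) : ℝ) = K1 at h ⊢
  have hn1 : (n : ℝ) - 1 ≠ 0 := by linarith
  field_simp
  linear_combination h
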